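/- Assume 𝒮_A(Δ) is compact and fix an adversary strategy (Ã₁,…,Ã_M) ∈ 𝒮_A(Δ). There exists ε₀ ∈ (0,1) such that, for every i ∈ [M], the family of random variables { T*/log(1/α) : 0 < α ≤ ε₀ } is uniformly integrable under P_i; that is, lim_{η→∞} sup_{0<α≤ε₀} E_i[ (T*/log(1/α)) · 1{ T*/log(1/α) ≥ η } ] = 0. -/

import Mathlib

open MeasureTheory Filter Finset Set Topology
open scoped ENNReal NNReal ENat

namespace AHT

noncomputable section

variable {X : Type*}

/-- A probability distribution on a finite alphabet. -/
def IsDist [Fintype X] (P : X → ℝ) : Prop :=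
  (∀ x, 0 ≤ P x) ∧ ∑ x, P x = 1

/-- Kullback–Leibler divergence. -/
def KL [Fintype X] (P Q : X → ℝ) : ℝ :=
  ∑ a, P a * Real.log (P a / Q a)

/-- Bhattacharyya distance. -/
def Bhat [Fintype X] (Q0 Q1 : X → ℝ) : ℝ :=
  -Real.log (∑ x, (Q0 x) ^ ((1 : ℝ) / 2) * (Q1 x) ^ ((1 : ℝ) / 2))

/-- Empirical distribution (type) of the first `n` samples. -/
def emp [Fintype X] [DecidableEq X] (n : ℕ) (ω : ℕ → X) (a : X) : ℝ :=
  (((Finset.range n).filter fun k => ω k = a).card : ℝ) / n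

/-- Row-stochastic matrix (adversary channel). -/
def RowStoch [Fintype X] (A : X → X → ℝ) : Prop :=
  (∀ x y, 0 ≤ A x y) ∧ ∀ x, ∑ y, A x y = 1

/-- Output distribution of channel `A` when the input distribution is `P`. -/
def push [Fintype X] (P : X → ℝ) (A : X → X → ℝ) (y : X) : ℝ :=
  ∑ x, P x * A x y

/-- `μ` is the law of an i.i.d. sequence with one-dimensional marginal `Q`. -/
def IsIID [Fintype X] [MeasurableSpace X] (μ : Measure (ℕ → X)) (Q : X → ℝ) : Prop :=
  IsProbabilityMeasure μ ∧
    ∀ (n : ℕ) (v : Fin n → X),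
      μ {ω | ∀ k : Fin n, ω (k : ℕ) = v k} = ENNReal.ofReal (∏ k, Q (v k))

/-- Admissible adversary channels for hypothesis distribution `Pi`. -/
def Adm [Fintype X] (d : (X → ℝ) → (X → ℝ) → ℝ) (Δ : ℝ) (Pi : X → ℝ) :
    Set (X → X → ℝ) :=
  {A | RowStoch A ∧ d Pi (push Pi A) ≤ Δ ∧ ∀ y, 0 < push Pi A y}

/-- The constant `C = Σ_{n ≥ 1} e^{-n^{1-ζ}}` with `ζ = 0.85`. -/
def Cζ : ℝ := ∑' n : ℕ, Real.exp (-((n : ℝ) + 1) ^ (0.15 : ℝ))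

/-- The thresholds `γ_n` (with `K = |𝒳|`). -/
def gammaTh (K M : ℕ) (α : ℝ) (n : ℕ) : ℝ :=
  Real.log (Cζ / α) / n + 1 / (n : ℝ) ^ (0.85 : ℝ) +
    ((K : ℝ) * Real.log ((n : ℝ) + 1) + Real.log ((M : ℝ) - 1)) / n

/-- The statistic `Z_i^{(n)}`. -/
def Zstat [Fintype X] [DecidableEq X] {M : ℕ} (P : Fin M → X → ℝ)
    (d : (X → ℝ) → (X → ℝ) → ℝ) (Δ : ℝ) (i : Fin M) (n : ℕ) (ω : ℕ → X) : ℝ :=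
  sInf {r | ∃ j, j ≠ i ∧ ∃ A ∈ Adm d Δ (P j), r = KL (emp n ω) (push (P j) A)}

/-- The one-sided stopping times `T_i`. -/
def Ti [Fintype X] [DecidableEq X] {M : ℕ} (P : Fin M → X → ℝ)
    (d : (X → ℝ) → (X → ℝ) → ℝ) (Δ α : ℝ) (i : Fin M) (ω : ℕ → X) : ℕ∞ :=
  sInf {t : ℕ∞ | ∃ n : ℕ, t = (n : ℕ∞) ∧ 1 ≤ n ∧
    gammaTh (Fintype.card X) M α n ≤ Zstat P d Δ i n ω}

/-- The stopping time `T*`. -/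
def Tstar [Fintype X] [DecidableEq X] {M : ℕ} (P : Fin M → X → ℝ)
    (d : (X → ℝ) → (X → ℝ) → ℝ) (Δ α : ℝ) (ω : ℕ → X) : ℕ∞ :=
  ⨅ i, Ti P d Δ α i ω

/-- Expected value of an `ℕ∞`-valued stopping time. -/
def ExpT [MeasurableSpace X] (μ : Measure (ℕ → X)) (T : (ℕ → X) → ℕ∞) : ℝ :=
  (∫⁻ ω, ((T ω : ℕ∞) : ℝ≥0∞) ∂μ).toReal

/-- Thresholds in the binary non-aware setting. -/
def gammaNA (K : ℕ) (α : ℝ) (n : ℕ) : ℝ :=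
  Real.log (Cζ / α) / n + 1 / (n : ℝ) ^ (0.85 : ℝ) + (K : ℝ) * Real.log ((n : ℝ) + 1) / n

/-- Admissible common channels in the non-aware setting. -/
def AdmNA [Fintype X] (d : (X → ℝ) → (X → ℝ) → ℝ) (Δ : ℝ) (P0 P1 : X → ℝ) :
    Set (X → X → ℝ) :=
  {A | RowStoch A ∧ max (d P0 (push P0 A)) (d P1 (push P1 A)) ≤ Δ ∧
    (∀ y, 0 < push P0 A y) ∧ ∀ y, 0 < push P1 A y}

/-- The statistic `S_n` in the non-aware setting. -/
def Sstat [Fintype X] [DecidableEq X] (P0 P1 : X → ℝ)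
    (d : (X → ℝ) → (X → ℝ) → ℝ) (Δ : ℝ) (n : ℕ) (ω : ℕ → X) : ℝ :=
  sInf {r | ∃ A ∈ AdmNA d Δ P0 P1,
    r = max (KL (emp n ω) (push P0 A)) (KL (emp n ω) (push P1 A))}

/-- Stopping time `τ*` of the non-aware test. -/
def tauNA [Fintype X] [DecidableEq X] (P0 P1 : X → ℝ)
    (d : (X → ℝ) → (X → ℝ) → ℝ) (Δ α : ℝ) (ω : ℕ → X) : ℕ∞ :=
  sInf {t : ℕ∞ | ∃ n : ℕ, t = (n : ℕ∞) ∧ 1 ≤ n ∧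
    gammaNA (Fintype.card X) α n ≤ Sstat P0 P1 d Δ n ω}

/-- A sequential test: a stopping time together with an `F_T`-measurable decision,
expressed functionally (the stopping decision and the final decision depend only on
the samples observed up to the stopping time). -/
structure SeqTest (X : Type*) (M : ℕ) where
  T : (ℕ → X) → ℕ∞
  dec : (ℕ → X) → Fin M
  adapted : ∀ ω ω' : ℕ → X, ∀ n : ℕ, T ω = (n : ℕ∞) →
    (∀ k < n, ω k = ω' k) → T ω' = (n : ℕ∞) ∧ dec ω' = dec ω

/-- Membership in the decision maker's strategy set `𝒮_D(α)`: all error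
probabilities are at most `α` whatever admissible strategy the adversary uses,
and the expected stopping times are finite. -/
def InSD [Fintype X] [MeasurableSpace X] {M : ℕ} (P : Fin M → X → ℝ)
    (d : (X → ℝ) → (X → ℝ) → ℝ) (Δ α : ℝ) (Φ : SeqTest X M) : Prop :=
  ∀ B : Fin M → X → X → ℝ, (∀ i, B i ∈ Adm d Δ (P i)) →
    ∀ ν : Fin M → Measure (ℕ → X), (∀ i, IsIID (ν i) (push (P i) (B i))) →
      ∀ i, ν i {ω | Φ.dec ω ≠ i} ≤ ENNReal.ofReal α ∧
        ∫⁻ ω, ((Φ.T ω : ℕ∞) : ℝ≥0∞) ∂(ν i) < ⊤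


/-! ### Auxiliary lemmas for the proof of Statement 9 -/

section UIAux

variable [Fintype X] [DecidableEq X]

lemma AHTisDist_push {P : X → ℝ} {A : X → X → ℝ} (hP : IsDist P) (hA : RowStoch A) :
    IsDist (push P A) := by
  constructor
  · intro y
    exact Finset.sum_nonneg fun x _ => mul_nonneg (hP.1 x) (hA.1 x y)
  · calc ∑ y, push P A y = ∑ x, ∑ y, P x * A x y := Finset.sum_comm
      _ = ∑ x, P x := by
          refine Finset.sum_congr rfl fun x _ => ?_
          rw [← Finset.mul_sum, hA.2 x, mul_one]
      _ = 1 := hP.2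

lemma AHTdist_le_one {P : X → ℝ} (hP : IsDist P) (a : X) : P a ≤ 1 := by
  rw [← hP.2]
  exact Finset.single_le_sum (fun x _ => hP.1 x) (Finset.mem_univ a)

lemma AHTexp_quad {x : ℝ} (h0 : 0 ≤ x) (h1 : x ≤ 1) : Real.exp x ≤ 1 + x + x ^ 2 := by
  have habs : |x| ≤ 1 := by rwa [abs_of_nonneg h0]
  have h := Real.exp_bound habs (n := 3) (by norm_num)
  have hsum : ∑ m ∈ Finset.range 3, x ^ m / (m.factorial : ℝ) = 1 + x + x ^ 2 / 2 := by
    simp [Finset.sum_range_succ, Nat.factorial]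
  rw [hsum] at h
  have habs3 : |x| ^ 3 = x ^ 3 := by rw [abs_of_nonneg h0]
  have hx3 : x ^ 3 ≤ x ^ 2 := pow_le_pow_of_le_one h0 h1 (by norm_num)
  have := abs_le.1 h
  have h2 : Real.exp x - (1 + x + x ^ 2 / 2) ≤ x ^ 3 * (4 / (6 * 3)) := by
    calc Real.exp x - (1 + x + x ^ 2 / 2) ≤ |x| ^ 3 * ((3:ℕ).succ / ((3:ℕ).factorial * 3) : ℝ) :=
          this.2
      _ = x ^ 3 * (4 / (6 * 3)) := by rw [habs3]; norm_num [Nat.factorial]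
  nlinarith

/-- Per-letter Chernoff factor bound. -/
lemma AHTsum_exp_le (Q f : X → ℝ) (hQ : IsDist Q) (hf0 : ∀ x, 0 ≤ f x) (hf1 : ∀ x, f x ≤ 1)
    {l t : ℝ} (hl0 : 0 ≤ l) (hl1 : l ≤ 1) :
    ∑ x, Q x * Real.exp (l * (f x - ((∑ y, Q y * f y) + t))) ≤ Real.exp (l ^ 2 - l * t) := by
  set m := ∑ y, Q y * f y with hm
  have hm0 : 0 ≤ m := Finset.sum_nonneg fun y _ => mul_nonneg (hQ.1 y) (hf0 y)
  have hm1 : m ≤ 1 := by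
    rw [← hQ.2]
    exact Finset.sum_le_sum fun y _ => by
      nlinarith [hQ.1 y, hf1 y, hf0 y]
  have key : ∀ x, Real.exp (l * f x) ≤ 1 + f x * (l + l ^ 2) := by
    intro x
    have hlf0 : 0 ≤ l * f x := mul_nonneg hl0 (hf0 x)
    have hlf1 : l * f x ≤ 1 := by nlinarith [hf0 x, hf1 x]
    have h := AHTexp_quad hlf0 hlf1
    have hfx : f x ^ 2 ≤ f x := by nlinarith [hf0 x, hf1 x]
    nlinarith [mul_le_mul_of_nonneg_left hfx (sq_nonneg l)]
  have step1 : ∑ x, Q x * Real.exp (l * (f x - (m + t)))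
      = (∑ x, Q x * Real.exp (l * f x)) * Real.exp (-(l * (m + t))) := by
    rw [Finset.sum_mul]
    refine Finset.sum_congr rfl fun x _ => ?_
    rw [mul_assoc, ← Real.exp_add]
    ring_nf
  have step2 : ∑ x, Q x * Real.exp (l * f x) ≤ 1 + m * (l + l ^ 2) := by
    have : ∑ x, Q x * Real.exp (l * f x) ≤ ∑ x, Q x * (1 + f x * (l + l ^ 2)) :=
      Finset.sum_le_sum fun x _ => mul_le_mul_of_nonneg_left (key x) (hQ.1 x)
    refine this.trans (le_of_eq ?_)
    calc ∑ x, Q x * (1 + f x * (l + l ^ 2))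
        = ∑ x, (Q x + (Q x * f x) * (l + l ^ 2)) := Finset.sum_congr rfl fun x _ => by ring
      _ = (∑ x, Q x) + (∑ x, Q x * f x) * (l + l ^ 2) := by
          rw [Finset.sum_add_distrib, Finset.sum_mul]
      _ = 1 + m * (l + l ^ 2) := by rw [hQ.2, hm]
  have step3 : 1 + m * (l + l ^ 2) ≤ Real.exp (m * (l + l ^ 2)) := by
    have := Real.add_one_le_exp (m * (l + l ^ 2))
    linarith
  calc ∑ x, Q x * Real.exp (l * (f x - (m + t)))
      = (∑ x, Q x * Real.exp (l * f x)) * Real.exp (-(l * (m + t))) := step1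
    _ ≤ Real.exp (m * (l + l ^ 2)) * Real.exp (-(l * (m + t))) := by
        refine mul_le_mul_of_nonneg_right (step2.trans step3) (Real.exp_nonneg _)
    _ = Real.exp (m * l ^ 2 - l * t) := by rw [← Real.exp_add]; ring_nf
    _ ≤ Real.exp (l ^ 2 - l * t) := by
        apply Real.exp_le_exp.2
        nlinarith [sq_nonneg l]

/-- Finitary Chernoff bound over vectors. -/
lemma AHTchernoff_vec (Q f : X → ℝ) (hQ : IsDist Q) (hf0 : ∀ x, 0 ≤ f x) (hf1 : ∀ x, f x ≤ 1)
    {t : ℝ} (ht0 : 0 < t) (ht1 : t ≤ 1) (n : ℕ) :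
    ∑ v ∈ Finset.univ.filter
        (fun v : Fin n → X => ((∑ y, Q y * f y) + t) * n ≤ ∑ k, f (v k)),
      ∏ k, Q (v k) ≤ Real.exp (-(2 * t ^ 2 / 9) * n) := by
  classical
  set l := t / 3 with hl
  have hl0 : 0 ≤ l := by positivity
  have hl1 : l ≤ 1 := by rw [hl]; linarith
  set m := ∑ y, Q y * f y with hm
  have step1 : ∀ v ∈ Finset.univ.filter
      (fun v : Fin n → X => (m + t) * n ≤ ∑ k, f (v k)),
      ∏ k, Q (v k) ≤ ∏ k, (Q (v k) * Real.exp (l * (f (v k) - (m + t)))) := by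
    intro v hv
    rw [Finset.mem_filter] at hv
    rw [Finset.prod_mul_distrib, ← Real.exp_sum]
    have hexp : 0 ≤ ∑ k, l * (f (v k) - (m + t)) := by
      have : ∑ k : Fin n, l * (f (v k) - (m + t))
          = l * ((∑ k, f (v k)) - (m + t) * n) := by
        calc ∑ k : Fin n, l * (f (v k) - (m + t))
            = l * (∑ k : Fin n, (f (v k) - (m + t))) := (Finset.mul_sum _ _ _).symm
          _ = l * ((∑ k, f (v k)) - (m + t) * n) := by
              rw [Finset.sum_sub_distrib, Finset.sum_const, Finset.card_univ,
                Fintype.card_fin, nsmul_eq_mul]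
              ring
      rw [this]
      have := hv.2
      nlinarith
    exact le_mul_of_one_le_right (Finset.prod_nonneg fun k _ => hQ.1 (v k))
      (Real.one_le_exp hexp)
  have step2 : ∑ v ∈ Finset.univ.filter
      (fun v : Fin n → X => (m + t) * n ≤ ∑ k, f (v k)), ∏ k, Q (v k)
      ≤ ∑ v : Fin n → X, ∏ k, (Q (v k) * Real.exp (l * (f (v k) - (m + t)))) := by
    refine (Finset.sum_le_sum step1).trans ?_
    refine Finset.sum_le_sum_of_subset_of_nonneg (Finset.filter_subset _ _) ?_
    intro v _ _
    exact Finset.prod_nonneg fun k _ =>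
      mul_nonneg (hQ.1 (v k)) (Real.exp_nonneg _)
  have step3 : ∑ v : Fin n → X, ∏ k, (Q (v k) * Real.exp (l * (f (v k) - (m + t))))
      = (∑ x, Q x * Real.exp (l * (f x - (m + t)))) ^ n := by
    have := Finset.prod_univ_sum (fun _ : Fin n => (Finset.univ : Finset X))
      (fun _ x => Q x * Real.exp (l * (f x - (m + t))))
    rw [Fintype.piFinset_univ] at this
    rw [← this, Finset.prod_const, Finset.card_univ, Fintype.card_fin]
  have step4 : (∑ x, Q x * Real.exp (l * (f x - (m + t)))) ^ n
      ≤ Real.exp (l ^ 2 - l * t) ^ n := by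
    apply pow_le_pow_left₀
    · exact Finset.sum_nonneg fun x _ => mul_nonneg (hQ.1 x) (Real.exp_nonneg _)
    · exact AHTsum_exp_le Q f hQ hf0 hf1 hl0 hl1
  have hfin : Real.exp (l ^ 2 - l * t) ^ n = Real.exp (-(2 * t ^ 2 / 9) * n) := by
    rw [← Real.exp_nat_mul]
    congr 1
    rw [hl]; ring
  calc _ ≤ _ := step2
    _ = _ := step3
    _ ≤ _ := step4
    _ = _ := hfin

end UIAux
section UIAux2

variable [Fintype X] [DecidableEq X] [MeasurableSpace X]

/-- Measure of a tail event for an additive statistic, via cylinder subadditivity and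
the finitary Chernoff bound. -/
lemma AHTmeasure_tail {μ : Measure (ℕ → X)} {Q : X → ℝ} (hμ : IsIID μ Q) (hQ : IsDist Q)
    (f : X → ℝ) (hf0 : ∀ x, 0 ≤ f x) (hf1 : ∀ x, f x ≤ 1)
    {t : ℝ} (ht0 : 0 < t) (ht1 : t ≤ 1) (n : ℕ) :
    μ {ω | ((∑ y, Q y * f y) + t) * n ≤ ∑ k ∈ Finset.range n, f (ω k)}
      ≤ ENNReal.ofReal (Real.exp (-(2 * t ^ 2 / 9) * n)) := by
  classical
  set m := ∑ y, Q y * f y with hm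
  set F : Finset (Fin n → X) :=
    Finset.univ.filter (fun v : Fin n → X => (m + t) * n ≤ ∑ k, f (v k)) with hF
  have hsub : {ω : ℕ → X | (m + t) * n ≤ ∑ k ∈ Finset.range n, f (ω k)}
      ⊆ ⋃ v ∈ F, {ω : ℕ → X | ∀ k : Fin n, ω (k : ℕ) = v k} := by
    intro ω hω
    simp only [Set.mem_setOf_eq] at hω
    have hmem : (fun k : Fin n => ω (k : ℕ)) ∈ F := by
      rw [hF, Finset.mem_filter]
      refine ⟨Finset.mem_univ _, ?_⟩
      rwa [Fin.sum_univ_eq_sum_range (fun k => f (ω k)) n]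
    exact Set.mem_biUnion hmem (fun k => rfl)
  calc μ {ω : ℕ → X | (m + t) * n ≤ ∑ k ∈ Finset.range n, f (ω k)}
      ≤ μ (⋃ v ∈ F, {ω : ℕ → X | ∀ k : Fin n, ω (k : ℕ) = v k}) := measure_mono hsub
    _ ≤ ∑ v ∈ F, μ {ω : ℕ → X | ∀ k : Fin n, ω (k : ℕ) = v k} :=
        measure_biUnion_finset_le F _
    _ = ∑ v ∈ F, ENNReal.ofReal (∏ k, Q (v k)) :=
        Finset.sum_congr rfl fun v _ => hμ.2 n v
    _ = ENNReal.ofReal (∑ v ∈ F, ∏ k, Q (v k)) :=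
        (ENNReal.ofReal_sum_of_nonneg fun v _ =>
          Finset.prod_nonneg fun k _ => hQ.1 (v k)).symm
    _ ≤ ENNReal.ofReal (Real.exp (-(2 * t ^ 2 / 9) * n)) :=
        ENNReal.ofReal_le_ofReal (AHTchernoff_vec Q f hQ hf0 hf1 ht0 ht1 n)

lemma AHTemp_isDist {n : ℕ} (hn : 1 ≤ n) (ω : ℕ → X) : IsDist (emp n ω) := by
  refine ⟨fun a => div_nonneg (Nat.cast_nonneg _) (Nat.cast_nonneg _), ?_⟩
  have hcount : ∑ a, ((Finset.filter (fun k => ω k = a) (Finset.range n)).card : ℝ)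
      = (n : ℝ) := by
    have hnat : ∑ a, (Finset.filter (fun k => ω k = a) (Finset.range n)).card = n := by
      simp only [Finset.card_filter]
      rw [Finset.sum_comm]
      simp
    exact_mod_cast congrArg (fun z : ℕ => (z : ℝ)) hnat
  unfold emp
  rw [← Finset.sum_div, hcount, div_self (by positivity : (n : ℝ) ≠ 0)]

/-- Deviation bound for the empirical measure. -/
lemma AHTmeasure_bad {μ : Measure (ℕ → X)} {Q : X → ℝ} (hμ : IsIID μ Q) (hQ : IsDist Q)
    {δ : ℝ} (hδ0 : 0 < δ) (hδ1 : δ ≤ 1) {n : ℕ} (hn : 1 ≤ n) :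
    μ {ω | ∃ a, δ ≤ |emp n ω a - Q a|}
      ≤ ENNReal.ofReal (2 * Fintype.card X * Real.exp (-(2 * δ ^ 2 / 9) * n)) := by
  classical
  have hnpos : (0 : ℝ) < n := by exact_mod_cast hn
  set fp : X → X → ℝ := fun a x => if x = a then 1 else 0 with hfp
  set fm : X → X → ℝ := fun a x => if x = a then 0 else 1 with hfm
  have hfp0 : ∀ a x, 0 ≤ fp a x := fun a x => by rw [hfp]; dsimp; split <;> norm_num
  have hfp1 : ∀ a x, fp a x ≤ 1 := fun a x => by rw [hfp]; dsimp; split <;> norm_num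
  have hfm0 : ∀ a x, 0 ≤ fm a x := fun a x => by rw [hfm]; dsimp; split <;> norm_num
  have hfm1 : ∀ a x, fm a x ≤ 1 := fun a x => by rw [hfm]; dsimp; split <;> norm_num
  have hmp : ∀ a, ∑ y, Q y * fp a y = Q a := by
    intro a
    rw [hfp]
    simp [mul_ite, Finset.sum_ite_eq']
  have hmm : ∀ a, ∑ y, Q y * fm a y = 1 - Q a := by
    intro a
    have : ∀ y, Q y * fm a y = Q y - Q y * fp a y := by
      intro y
      rw [hfp, hfm]; dsimp; split <;> ring
    rw [Finset.sum_congr rfl fun y _ => this y, Finset.sum_sub_distrib, hQ.2, hmp a]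
  have hcount : ∀ a (ω : ℕ → X),
      ∑ k ∈ Finset.range n, fp a (ω k)
        = ((Finset.filter (fun k => ω k = a) (Finset.range n)).card : ℝ) := by
    intro a ω
    rw [Finset.card_filter]
    push_cast
    exact Finset.sum_congr rfl fun k _ => by rw [hfp]
  have hcountm : ∀ a (ω : ℕ → X),
      ∑ k ∈ Finset.range n, fm a (ω k)
        = (n : ℝ) - ∑ k ∈ Finset.range n, fp a (ω k) := by
    intro a ω
    have hpt : ∀ k, fm a (ω k) = 1 - fp a (ω k) := fun k => by
      rw [hfp, hfm]; dsimp; split <;> ring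
    rw [Finset.sum_congr rfl fun k _ => hpt k, Finset.sum_sub_distrib, Finset.sum_const,
      Finset.card_range, nsmul_eq_mul, mul_one]
  -- the two one-sided events
  set Ep : X → Set (ℕ → X) := fun a =>
    {ω | ((∑ y, Q y * fp a y) + δ) * n ≤ ∑ k ∈ Finset.range n, fp a (ω k)} with hEp
  set Em : X → Set (ℕ → X) := fun a =>
    {ω | ((∑ y, Q y * fm a y) + δ) * n ≤ ∑ k ∈ Finset.range n, fm a (ω k)} with hEm
  have hsub : {ω : ℕ → X | ∃ a, δ ≤ |emp n ω a - Q a|} ⊆ ⋃ a ∈ Finset.univ, (Ep a ∪ Em a) := by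
    intro ω hω
    obtain ⟨a, ha⟩ := hω
    have hempval : emp n ω a = (∑ k ∈ Finset.range n, fp a (ω k)) / n := by
      rw [hcount a ω]; rfl
    refine Set.mem_biUnion (Finset.mem_univ a) ?_
    rcases le_abs.1 ha with h | h
    · left
      rw [hEp]
      simp only [Set.mem_setOf_eq]
      rw [hmp a]
      have : Q a + δ ≤ (∑ k ∈ Finset.range n, fp a (ω k)) / n := by
        rw [← hempval]; linarith
      calc (Q a + δ) * n ≤ ((∑ k ∈ Finset.range n, fp a (ω k)) / n) * n :=
            mul_le_mul_of_nonneg_right this hnpos.le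
        _ = ∑ k ∈ Finset.range n, fp a (ω k) := by field_simp
    · right
      rw [hEm]
      simp only [Set.mem_setOf_eq]
      rw [hmm a, hcountm a ω]
      have hle : emp n ω a ≤ Q a - δ := by linarith
      have : (∑ k ∈ Finset.range n, fp a (ω k)) ≤ (Q a - δ) * n := by
        rw [hempval] at hle
        calc (∑ k ∈ Finset.range n, fp a (ω k))
            = ((∑ k ∈ Finset.range n, fp a (ω k)) / n) * n := by field_simp
          _ ≤ (Q a - δ) * n := mul_le_mul_of_nonneg_right hle hnpos.le
      nlinarith
  have hbound : ∀ a, μ (Ep a ∪ Em a)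
      ≤ ENNReal.ofReal (2 * Real.exp (-(2 * δ ^ 2 / 9) * n)) := by
    intro a
    have h1 := AHTmeasure_tail hμ hQ (fp a) (hfp0 a) (hfp1 a) hδ0 hδ1 n
    have h2 := AHTmeasure_tail hμ hQ (fm a) (hfm0 a) (hfm1 a) hδ0 hδ1 n
    calc μ (Ep a ∪ Em a) ≤ μ (Ep a) + μ (Em a) := measure_union_le _ _
      _ ≤ ENNReal.ofReal (Real.exp (-(2 * δ ^ 2 / 9) * n))
          + ENNReal.ofReal (Real.exp (-(2 * δ ^ 2 / 9) * n)) := add_le_add h1 h2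
      _ = ENNReal.ofReal (2 * Real.exp (-(2 * δ ^ 2 / 9) * n)) := by
          rw [← ENNReal.ofReal_add (Real.exp_nonneg _) (Real.exp_nonneg _)]
          congr 1
          ring
  calc μ {ω : ℕ → X | ∃ a, δ ≤ |emp n ω a - Q a|}
      ≤ μ (⋃ a ∈ Finset.univ, (Ep a ∪ Em a)) := measure_mono hsub
    _ ≤ ∑ a ∈ Finset.univ, μ (Ep a ∪ Em a) := measure_biUnion_finset_le _ _
    _ ≤ ∑ _a ∈ (Finset.univ : Finset X),
          ENNReal.ofReal (2 * Real.exp (-(2 * δ ^ 2 / 9) * n)) :=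
        Finset.sum_le_sum fun a _ => hbound a
    _ = (Fintype.card X : ℝ≥0∞) * ENNReal.ofReal (2 * Real.exp (-(2 * δ ^ 2 / 9) * n)) := by
        rw [Finset.sum_const, Finset.card_univ, nsmul_eq_mul]
    _ = ENNReal.ofReal (2 * Fintype.card X * Real.exp (-(2 * δ ^ 2 / 9) * n)) := by
        rw [← ENNReal.ofReal_natCast (Fintype.card X),
          ← ENNReal.ofReal_mul (Nat.cast_nonneg _)]
        congr 1
        ring

end UIAux2
section UIAux3

variable [Fintype X] [DecidableEq X]

/-- Upper bound on KL in terms of the ℓ¹-distance, when `q` is bounded below. -/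
lemma AHTKL_le {p q : X → ℝ} (hp : IsDist p) {c : ℝ} (hc : 0 < c) (hq : ∀ a, c ≤ q a) :
    KL p q ≤ ∑ a, |p a - q a| / c := by
  refine Finset.sum_le_sum fun a _ => ?_
  have hqa : 0 < q a := lt_of_lt_of_le hc (hq a)
  rcases eq_or_lt_of_le (hp.1 a) with h0 | hpa
  · rw [← h0]
    simp only [zero_mul]
    positivity
  · have hlog : Real.log (p a / q a) ≤ (p a - q a) / q a := by
      have h := Real.log_le_sub_one_of_pos (div_pos hpa hqa)
      calc Real.log (p a / q a) ≤ p a / q a - 1 := h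
        _ = (p a - q a) / q a := by field_simp
    have h1 : p a * Real.log (p a / q a) ≤ p a * ((p a - q a) / q a) :=
      mul_le_mul_of_nonneg_left hlog hpa.le
    have hp1 : p a ≤ 1 := AHTdist_le_one hp a
    rcases le_or_gt (q a) (p a) with hge | hlt
    · have hnn : 0 ≤ (p a - q a) / q a := div_nonneg (by linarith) hqa.le
      have h2 : p a * ((p a - q a) / q a) ≤ (p a - q a) / q a := by nlinarith
      have h3 : (p a - q a) / q a ≤ |p a - q a| / c := by
        rw [abs_of_nonneg (by linarith)]
        exact div_le_div_of_nonneg_left (by linarith) hc (hq a)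
      linarith
    · have h2 : p a * ((p a - q a) / q a) ≤ 0 :=
        mul_nonpos_of_nonneg_of_nonpos hpa.le
          (div_nonpos_of_nonpos_of_nonneg (by linarith) hqa.le)
      have h3 : (0:ℝ) ≤ |p a - q a| / c := by positivity
      linarith

/-- Jensen: `exp(-KL/2) ≤ ∑ √(p q)`. -/
lemma AHTexp_neg_half_KL_le {p q : X → ℝ} (hp : IsDist p) (hq0 : ∀ a, 0 ≤ q a)
    (hpq : ∀ a, 0 < p a → 0 < q a) :
    Real.exp (-(KL p q) / 2) ≤ ∑ a, Real.sqrt (p a * q a) := by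
  classical
  set t : X → ℝ := fun a => Real.log (q a / p a) with ht
  have hKLt : ∑ a, p a * t a = -(KL p q) := by
    unfold KL
    rw [← Finset.sum_neg_distrib]
    refine Finset.sum_congr rfl fun a _ => ?_
    rcases eq_or_lt_of_le (hp.1 a) with h0 | hpa
    · rw [← h0]; ring
    · rw [ht]
      dsimp only
      rw [show q a / p a = (p a / q a)⁻¹ by rw [inv_div], Real.log_inv]
      ring
  have hjensen : Real.exp ((∑ a, p a * t a) / 2) ≤ ∑ a, p a * Real.exp (t a / 2) := by
    set S := ∑ a, p a * t a with hS
    have hterm : ∀ a,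
        p a * Real.exp (S / 2) * (1 + (t a / 2 - S / 2)) ≤ p a * Real.exp (t a / 2) := by
      intro a
      have h1 : 1 + (t a / 2 - S / 2) ≤ Real.exp (t a / 2 - S / 2) := by
        have := Real.add_one_le_exp (t a / 2 - S / 2); linarith
      have h2 : Real.exp (S / 2) * (1 + (t a / 2 - S / 2))
          ≤ Real.exp (S / 2) * Real.exp (t a / 2 - S / 2) :=
        mul_le_mul_of_nonneg_left h1 (Real.exp_nonneg _)
      rw [← Real.exp_add, show S / 2 + (t a / 2 - S / 2) = t a / 2 by ring] at h2
      calc p a * Real.exp (S / 2) * (1 + (t a / 2 - S / 2))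
          = p a * (Real.exp (S / 2) * (1 + (t a / 2 - S / 2))) := by ring
        _ ≤ p a * Real.exp (t a / 2) := mul_le_mul_of_nonneg_left h2 (hp.1 a)
    have hsum := Finset.sum_le_sum fun a (_ : a ∈ Finset.univ) => hterm a
    have hlhs : ∑ a, p a * Real.exp (S / 2) * (1 + (t a / 2 - S / 2)) = Real.exp (S / 2) := by
      have e1 : ∀ a, p a * Real.exp (S / 2) * (1 + (t a / 2 - S / 2))
          = (Real.exp (S / 2) * (1 - S / 2)) * p a
            + (Real.exp (S / 2) / 2) * (p a * t a) := fun a => by ring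
      rw [Finset.sum_congr rfl fun a _ => e1 a, Finset.sum_add_distrib,
        ← Finset.mul_sum, ← Finset.mul_sum, hp.2, ← hS]
      ring
    rw [hlhs] at hsum
    exact hsum
  have hident : ∀ a, p a * Real.exp (t a / 2) = Real.sqrt (p a * q a) := by
    intro a
    rcases eq_or_lt_of_le (hp.1 a) with h0 | hpa
    · rw [← h0]; simp
    · have hqa := hpq a hpa
      have hx : 0 < q a / p a := div_pos hqa hpa
      have h2 : Real.exp (t a / 2) ^ 2 = q a / p a := by
        rw [← Real.exp_nat_mul]
        rw [show ((2 : ℕ) : ℝ) * (t a / 2) = t a by push_cast; ring]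
        rw [ht]
        exact Real.exp_log hx
      have hsq : Real.exp (t a / 2) = Real.sqrt (q a / p a) := by
        rw [← h2, Real.sqrt_sq (Real.exp_nonneg _)]
      rw [hsq, Real.sqrt_div hqa.le (p a)]
      calc p a * (Real.sqrt (q a) / Real.sqrt (p a))
          = (p a / Real.sqrt (p a)) * Real.sqrt (q a) := by ring
        _ = Real.sqrt (p a) * Real.sqrt (q a) := by rw [Real.div_sqrt]
        _ = Real.sqrt (p a * q a) := (Real.sqrt_mul (hp.1 a) (q a)).symm
  calc Real.exp (-(KL p q) / 2) = Real.exp ((∑ a, p a * t a) / 2) := by rw [hKLt]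
    _ ≤ ∑ a, p a * Real.exp (t a / 2) := hjensen
    _ = ∑ a, Real.sqrt (p a * q a) := Finset.sum_congr rfl fun a _ => hident a

/-- Hellinger-affinity bound under a pointwise gap. -/
lemma AHTsqrt_sum_le {p q : X → ℝ} (hp : IsDist p) (hq : IsDist q) {a₀ : X} {s : ℝ}
    (hs0 : 0 ≤ s) (hs : s ≤ |p a₀ - q a₀|) :
    ∑ a, Real.sqrt (p a * q a) ≤ 1 - s ^ 2 / 8 := by
  have hsqm : ∀ a, Real.sqrt (p a * q a) = Real.sqrt (p a) * Real.sqrt (q a) :=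
    fun a => Real.sqrt_mul (hp.1 a) (q a)
  have hid : ∑ a, (Real.sqrt (p a) - Real.sqrt (q a)) ^ 2
      = 2 - 2 * ∑ a, Real.sqrt (p a) * Real.sqrt (q a) := by
    have e1 : ∀ a, (Real.sqrt (p a) - Real.sqrt (q a)) ^ 2
        = p a + q a - 2 * (Real.sqrt (p a) * Real.sqrt (q a)) := by
      intro a
      have ha := Real.sq_sqrt (hp.1 a)
      have hb := Real.sq_sqrt (hq.1 a)
      nlinarith
    rw [Finset.sum_congr rfl fun a _ => e1 a, Finset.sum_sub_distrib,
      Finset.sum_add_distrib, hp.2, hq.2, ← Finset.mul_sum]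
    ring
  have hkey : s ^ 2 / 4 ≤ (Real.sqrt (p a₀) - Real.sqrt (q a₀)) ^ 2 := by
    have ha := Real.sq_sqrt (hp.1 a₀)
    have hb := Real.sq_sqrt (hq.1 a₀)
    have ha0 := Real.sqrt_nonneg (p a₀)
    have hb0 := Real.sqrt_nonneg (q a₀)
    have hp1 : p a₀ ≤ 1 := AHTdist_le_one hp a₀
    have hq1 : q a₀ ≤ 1 := AHTdist_le_one hq a₀
    have ha1 : Real.sqrt (p a₀) ≤ 1 := by
      rw [show (1:ℝ) = Real.sqrt 1 by simp]
      exact Real.sqrt_le_sqrt hp1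
    have hb1 : Real.sqrt (q a₀) ≤ 1 := by
      rw [show (1:ℝ) = Real.sqrt 1 by simp]
      exact Real.sqrt_le_sqrt hq1
    have hfac : (Real.sqrt (p a₀) - Real.sqrt (q a₀)) * (Real.sqrt (p a₀) + Real.sqrt (q a₀))
        = p a₀ - q a₀ := by nlinarith
    have hs2 : s ^ 2 ≤ (p a₀ - q a₀) ^ 2 := by
      have := pow_le_pow_left₀ hs0 hs 2
      rwa [sq_abs] at this
    have hsum2 : (Real.sqrt (p a₀) + Real.sqrt (q a₀)) ^ 2 ≤ 4 := by nlinarith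
    have hd2 : (p a₀ - q a₀) ^ 2 = (Real.sqrt (p a₀) - Real.sqrt (q a₀)) ^ 2
        * (Real.sqrt (p a₀) + Real.sqrt (q a₀)) ^ 2 := by
      rw [← mul_pow, hfac]
    nlinarith [sq_nonneg (Real.sqrt (p a₀) - Real.sqrt (q a₀))]
  have hsingle : (Real.sqrt (p a₀) - Real.sqrt (q a₀)) ^ 2
      ≤ ∑ a, (Real.sqrt (p a) - Real.sqrt (q a)) ^ 2 :=
    Finset.single_le_sum (f := fun a => (Real.sqrt (p a) - Real.sqrt (q a)) ^ 2)
      (fun a _ => sq_nonneg _) (Finset.mem_univ a₀)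
  have := hsqm
  calc ∑ a, Real.sqrt (p a * q a) = ∑ a, Real.sqrt (p a) * Real.sqrt (q a) :=
      Finset.sum_congr rfl fun a _ => hsqm a
    _ ≤ 1 - s ^ 2 / 8 := by linarith

/-- Quantitative positivity of KL under a one-coordinate gap. -/
lemma AHTKL_ge_of_gap {p q : X → ℝ} (hp : IsDist p) (hq : IsDist q) (hq0 : ∀ a, 0 < q a)
    {a₀ : X} {s : ℝ} (hs0 : 0 ≤ s) (hs : s ≤ |p a₀ - q a₀|) :
    s ^ 2 / 4 ≤ KL p q := by
  have h1 := AHTexp_neg_half_KL_le hp (fun a => (hq0 a).le) (fun a _ => hq0 a)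
  have h2 := AHTsqrt_sum_le hp hq hs0 hs
  have h3 : Real.exp (-(KL p q) / 2) ≤ 1 - s ^ 2 / 8 := h1.trans h2
  have hpos : 0 < 1 - s ^ 2 / 8 := lt_of_lt_of_le (Real.exp_pos _) h3
  have h4 : -(KL p q) / 2 ≤ Real.log (1 - s ^ 2 / 8) := by
    have := Real.log_le_log (Real.exp_pos _) h3
    rwa [Real.log_exp] at this
  have h5 : Real.log (1 - s ^ 2 / 8) ≤ -(s ^ 2 / 8) := by
    have := Real.log_le_sub_one_of_pos hpos; linarith
  linarith

end UIAux3

lemma AHTofReal_le_tsum_indicator (x : ℝ) :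
    ENNReal.ofReal x ≤ ∑' m : ℕ, (if (m : ℝ) ≤ x then (1 : ℝ≥0∞) else 0) := by
  rcases le_or_gt x 0 with hx | hx
  · rw [ENNReal.ofReal_eq_zero.2 hx]
    exact zero_le
  · have key : ∑' m : ℕ, (if (m : ℝ) ≤ x then (1 : ℝ≥0∞) else 0)
        = ∑ m ∈ Finset.range (⌊x⌋₊ + 1), (if (m : ℝ) ≤ x then (1 : ℝ≥0∞) else 0) := by
      refine tsum_eq_sum fun m hm => ?_
      rw [Finset.mem_range, Nat.lt_add_one_iff] at hm
      rw [if_neg]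
      intro hle
      exact hm (Nat.le_floor hle)
    have hval : ∀ m ∈ Finset.range (⌊x⌋₊ + 1), (if (m : ℝ) ≤ x then (1 : ℝ≥0∞) else 0) = 1 := by
      intro m hm
      rw [Finset.mem_range, Nat.lt_add_one_iff] at hm
      rw [if_pos ((Nat.le_floor_iff hx.le).1 hm)]
    rw [key, Finset.sum_congr rfl hval, Finset.sum_const, Finset.card_range, nsmul_eq_mul,
      mul_one]
    calc ENNReal.ofReal x ≤ ENNReal.ofReal ((⌊x⌋₊ + 1 : ℕ) : ℝ) :=
        ENNReal.ofReal_le_ofReal (by push_cast; exact (Nat.lt_floor_add_one x).le)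
      _ = ((⌊x⌋₊ + 1 : ℕ) : ℝ≥0∞) := ENNReal.ofReal_natCast _

set_option maxHeartbeats 2000000 in
/-- uniform integrability of the family { T*/log(1/α) : 0 < α ≤ ε₀ }. -/
theorem Tstar_uniformly_integrable {X : Type*} [Fintype X] [DecidableEq X]
    [MeasurableSpace X]
    {M : ℕ} (hM : 2 ≤ M) (P : Fin M → X → ℝ) (hP : ∀ i, IsDist (P i))
    (hPd : ∀ i j, i ≠ j → P i ≠ P j)
    (d : (X → ℝ) → (X → ℝ) → ℝ) (Δ : ℝ) (hΔ : 0 < Δ)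
    (hcompact : IsCompact {A : Fin M → X → X → ℝ | ∀ i, A i ∈ Adm d Δ (P i)})
    (ε : ℝ) (hε : 0 < ε)
    (hsep : ∀ i j, i ≠ j → ∀ Ai ∈ Adm d Δ (P i), ∀ Aj ∈ Adm d Δ (P j),
      ε ≤ KL (push (P i) Ai) (push (P j) Aj))
    (Atil : Fin M → X → X → ℝ) (hAtil : ∀ i, Atil i ∈ Adm d Δ (P i))
    (μ : Fin M → Measure (ℕ → X)) (hμ : ∀ i, IsIID (μ i) (push (P i) (Atil i))) :
    ∃ ε₀ : ℝ, 0 < ε₀ ∧ ε₀ < 1 ∧ ∀ i : Fin M,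
      Tendsto (fun η : ℝ =>
          sSup {e : ℝ | ∃ α : ℝ, 0 < α ∧ α ≤ ε₀ ∧
            e = ∫ ω in {ω | η ≤ ((Tstar P d Δ α ω).toNat : ℝ) / Real.log (1 / α)},
              ((Tstar P d Δ α ω).toNat : ℝ) / Real.log (1 / α) ∂(μ i)})
        atTop (𝓝 0) := by
  classical
  -- ### basic facts
  have hXne : Nonempty X := by
    rcases isEmpty_or_nonempty X with hX | hX
    · exfalso
      have h1 := (hP ⟨0, by omega⟩).2
      rw [Finset.univ_eq_empty, Finset.sum_empty] at h1
      norm_num at h1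
    · exact hX
  have hMne : Nonempty (Fin M) := ⟨⟨0, by omega⟩⟩
  have hK1 : 1 ≤ Fintype.card X := Fintype.card_pos
  have hKR : (0:ℝ) < Fintype.card X := by exact_mod_cast hK1
  refine ⟨1/2, by norm_num, by norm_num, ?_⟩
  intro i
  haveI hprob : IsProbabilityMeasure (μ i) := (hμ i).1
  have hQidist : IsDist (push (P i) (Atil i)) := AHTisDist_push (hP i) (hAtil i).1
  -- ### uniform lower bound c₀ for admissible output distributions
  obtain ⟨c₀, hc₀pos, hc₀⟩ : ∃ c₀ : ℝ, 0 < c₀ ∧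
      ∀ (j : Fin M) (y : X), ∀ A ∈ Adm d Δ (P j), c₀ ≤ push (P j) A y := by
    have hcjy : ∀ (j : Fin M) (y : X), ∃ c : ℝ, 0 < c ∧
        ∀ A ∈ Adm d Δ (P j), c ≤ push (P j) A y := by
      intro j y
      have hSne : {A : Fin M → X → X → ℝ | ∀ i', A i' ∈ Adm d Δ (P i')}.Nonempty :=
        ⟨Atil, hAtil⟩
      have hcont : ContinuousOn (fun A : Fin M → X → X → ℝ => push (P j) (A j) y)
          {A : Fin M → X → X → ℝ | ∀ i', A i' ∈ Adm d Δ (P i')} := by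
      -- push (P j) (A j) y = ∑ x, P j x * A j x y
        apply Continuous.continuousOn
        unfold push
        exact continuous_finset_sum _ fun x _ => continuous_const.mul
          ((continuous_apply y).comp ((continuous_apply x).comp (continuous_apply j)))
      obtain ⟨A₀, hA₀S, hmin⟩ := hcompact.exists_isMinOn hSne hcont
      refine ⟨push (P j) (A₀ j) y, (hA₀S j).2.2 y, ?_⟩
      intro A hA
      have hmem : (fun i' => if i' = j then A else Atil i')
          ∈ {A : Fin M → X → X → ℝ | ∀ i', A i' ∈ Adm d Δ (P i')} := by
        intro i'
        by_cases h : i' = j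
        · subst h; simpa using hA
        · simpa [h] using hAtil i'
      have hle := hmin hmem
      simpa using hle
    choose cf hcfpos hcfle using hcjy
    haveI := hXne
    haveI : Nonempty (Fin M × X) := inferInstance
    have hne : (Finset.univ : Finset (Fin M × X)).Nonempty := Finset.univ_nonempty
    refine ⟨Finset.univ.inf' hne (fun p : Fin M × X => cf p.1 p.2), ?_, ?_⟩
    · exact (Finset.lt_inf'_iff hne).2 fun p _ => hcfpos p.1 p.2
    · intro j y A hA
      exact le_trans (Finset.inf'_le _ (Finset.mem_univ (j, y))) (hcfle j y A hA)
  -- ### constants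
  set d₀ : ℝ := c₀ * ε / Fintype.card X with hd₀def
  have hd₀pos : 0 < d₀ := div_pos (mul_pos hc₀pos hε) hKR
  set δb : ℝ := min (d₀ / 2) 1 with hδbdef
  have hδbpos : 0 < δb := lt_min (by linarith) one_pos
  have hδb1 : δb ≤ 1 := min_le_right _ _
  have hδbd : δb ≤ d₀ / 2 := min_le_left _ _
  set θ : ℝ := d₀ ^ 2 / 16 with hθdef
  have hθpos : 0 < θ := by positivity
  set κ : ℝ := 2 * δb ^ 2 / 9 with hκdef
  have hκpos : 0 < κ := by positivity
  -- ### lower bound for Zstat under accurate empirical measure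
  have hZ : ∀ (n : ℕ) (ω : ℕ → X), 1 ≤ n →
      (∀ a, |emp n ω a - push (P i) (Atil i) a| < δb) → θ ≤ Zstat P d Δ i n ω := by
    intro n ω hn hacc
    obtain ⟨j₁, hj₁⟩ := Fintype.exists_ne_of_one_lt_card
      (by simp only [Fintype.card_fin]; omega) i
    refine le_csInf ⟨KL (emp n ω) (push (P j₁) (Atil j₁)), j₁, hj₁, Atil j₁, hAtil j₁, rfl⟩ ?_
    rintro r ⟨j, hj, A, hA, rfl⟩
    have hqdist : IsDist (push (P j) A) := AHTisDist_push (hP j) hA.1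
    have hqpos : ∀ y, 0 < push (P j) A y := hA.2.2
    have hsepij : ε ≤ KL (push (P i) (Atil i)) (push (P j) A) :=
      hsep i j (Ne.symm hj) (Atil i) (hAtil i) A hA
    have hgap : ∃ a₀, d₀ ≤ |push (P i) (Atil i) a₀ - push (P j) A a₀| := by
      by_contra hno
      push_neg at hno
      have hKLle : KL (push (P i) (Atil i)) (push (P j) A)
          ≤ ∑ a, |push (P i) (Atil i) a - push (P j) A a| / c₀ :=
        AHTKL_le hQidist hc₀pos (fun a => hc₀ j a A hA)
      haveI := hXne
      have hlt : ∑ a, |push (P i) (Atil i) a - push (P j) A a| / c₀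
          < ∑ _a : X, d₀ / c₀ :=
        Finset.sum_lt_sum_of_nonempty Finset.univ_nonempty fun a _ =>
          div_lt_div_of_pos_right (hno a) hc₀pos
      have heq : ∑ _a : X, d₀ / c₀ = (Fintype.card X : ℝ) * (d₀ / c₀) := by
        rw [Finset.sum_const, Finset.card_univ, nsmul_eq_mul]
      have heps : (Fintype.card X : ℝ) * (d₀ / c₀) = ε := by
        rw [hd₀def]; field_simp
      linarith
    obtain ⟨a₀, ha₀⟩ := hgap
    have htri : |push (P i) (Atil i) a₀ - push (P j) A a₀|
        ≤ |push (P i) (Atil i) a₀ - emp n ω a₀| + |emp n ω a₀ - push (P j) A a₀| :=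
      abs_sub_le _ _ _
    have h1 : |push (P i) (Atil i) a₀ - emp n ω a₀| < δb := by
      rw [abs_sub_comm]; exact hacc a₀
    have hgap2 : d₀ / 2 ≤ |emp n ω a₀ - push (P j) A a₀| := by linarith
    have hKLge := AHTKL_ge_of_gap (AHTemp_isDist hn ω) hqdist hqpos
      (by linarith : (0:ℝ) ≤ d₀ / 2) hgap2
    calc θ = (d₀ / 2) ^ 2 / 4 := by rw [hθdef]; ring
      _ ≤ KL (emp n ω) (push (P j) A) := hKLge
  -- ### deviation bound
  have hbad : ∀ n : ℕ, 1 ≤ n →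
      μ i {ω | ∃ a, δb ≤ |emp n ω a - push (P i) (Atil i) a|}
        ≤ ENNReal.ofReal (2 * Fintype.card X * Real.exp (-κ * n)) := by
    intro n hn
    have h := AHTmeasure_bad (hμ i) hQidist hδbpos hδb1 hn
    rw [hκdef]
    exact h
  -- ### bound on the thresholds
  have hCζ0 : (0:ℝ) ≤ Cζ := tsum_nonneg fun n => (Real.exp_pos _).le
  have hc1 : (0:ℝ) ≤ Real.log (Cζ + 1) := Real.log_nonneg (by linarith)
  have hlogC : ∀ β : ℝ, 0 < β → β ≤ 1 →
      Real.log (Cζ / β) ≤ Real.log (Cζ + 1) + Real.log (1 / β) := by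
    intro β hβ hβ1
    have hlog1 : 0 ≤ Real.log (1 / β) :=
      Real.log_nonneg (by rw [le_div_iff₀ hβ]; linarith)
    rcases eq_or_lt_of_le hCζ0 with h0 | h0
    · rw [← h0, zero_div, Real.log_zero, zero_add, Real.log_one]
      linarith
    · have hmono : Cζ / β ≤ (Cζ + 1) * (1 / β) := by
        rw [div_eq_mul_inv, ← one_div]
        have h1β : 0 ≤ 1 / β := by positivity
        nlinarith
      calc Real.log (Cζ / β) ≤ Real.log ((Cζ + 1) * (1 / β)) :=
            Real.log_le_log (by positivity) hmono
        _ = Real.log (Cζ + 1) + Real.log (1 / β) :=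
            Real.log_mul (by positivity) (by positivity)
  -- the α-independent part of the threshold bound tends to 0
  have hhtend : Tendsto (fun n : ℕ =>
      (Real.log (Cζ + 1) + (Fintype.card X : ℝ) * Real.log ((n:ℝ) + 1)
        + Real.log ((M:ℝ) - 1)) / n + 1 / (n:ℝ) ^ (0.85:ℝ)) atTop (𝓝 0) := by
    have hg1 : Tendsto (fun n : ℕ => (Real.log (Cζ + 1) + Real.log ((M:ℝ) - 1)) / n)
        atTop (𝓝 0) := tendsto_const_div_atTop_nhds_zero_nat _
    have hlogn : Tendsto (fun n : ℕ => Real.log ((n:ℝ) + 1) / ((n:ℝ) + 1)) atTop (𝓝 0) :=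
      (Real.isLittleO_log_id_atTop.tendsto_div_nhds_zero).comp
        (tendsto_atTop_add_const_right atTop 1 tendsto_natCast_atTop_atTop)
    have hratio : Tendsto (fun n : ℕ => ((n:ℝ) + 1) / n) atTop (𝓝 1) := by
      have heq : (fun n : ℕ => (1:ℝ) + 1 / n) =ᶠ[atTop] (fun n : ℕ => ((n:ℝ) + 1) / n) := by
        filter_upwards [eventually_ge_atTop 1] with n hn
        have hn0 : (n:ℝ) ≠ 0 := by positivity
        field_simp
      have h1 : Tendsto (fun n : ℕ => (1:ℝ) + 1 / n) atTop (𝓝 1) := by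
        have : Tendsto (fun n : ℕ => 1 / (n : ℝ)) atTop (𝓝 0) := tendsto_one_div_atTop_nhds_zero_nat
        simpa using tendsto_const_nhds.add this
      exact h1.congr' heq
    have hdivdiv : ∀ (a b c : ℝ), c ≠ 0 → a / c * (c / b) = a / b := by
      intro a b c hc
      rw [div_mul_div_comm, mul_comm a c, mul_div_mul_left _ _ hc]
    have hg2' : Tendsto (fun n : ℕ => Real.log ((n:ℝ) + 1) / n) atTop (𝓝 0) := by
      have hprod := hlogn.mul hratio
      rw [zero_mul] at hprod
      refine hprod.congr fun n => ?_
      exact hdivdiv _ _ _ (by positivity)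
    have hg2 : Tendsto (fun n : ℕ => (Fintype.card X : ℝ) * (Real.log ((n:ℝ) + 1) / n))
        atTop (𝓝 0) := by
      have := hg2'.const_mul (Fintype.card X : ℝ)
      simpa using this
    have hg3 : Tendsto (fun n : ℕ => 1 / (n:ℝ) ^ (0.85:ℝ)) atTop (𝓝 0) := by
      have h := (tendsto_rpow_neg_atTop (by norm_num : (0:ℝ) < 0.85)).comp
        tendsto_natCast_atTop_atTop
      refine h.congr fun n => ?_
      simp only [Function.comp_apply]
      rw [Real.rpow_neg (Nat.cast_nonneg n), one_div]
    have hsum := (hg1.add hg2).add hg3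
    rw [show (0:ℝ) + 0 + 0 = 0 by ring] at hsum
    refine hsum.congr fun n => ?_
    ring
  -- ### choose N₀ and state the threshold bound
  obtain ⟨N₀, hN₀⟩ : ∃ N₀ : ℕ, ∀ n ≥ N₀,
      (Real.log (Cζ + 1) + (Fintype.card X : ℝ) * Real.log ((n:ℝ) + 1)
        + Real.log ((M:ℝ) - 1)) / n + 1 / (n:ℝ) ^ (0.85:ℝ) < θ / 2 :=
    eventually_atTop.1 (hhtend.eventually_lt_const (by linarith : (0:ℝ) < θ / 2))
  set N1 : ℕ := max N₀ 1 with hN1def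
  have hγ : ∀ β : ℝ, 0 < β → β ≤ 1/2 → ∀ n : ℕ, N1 ≤ n →
      2 * Real.log (1/β) / θ ≤ (n:ℝ) → gammaTh (Fintype.card X) M β n ≤ θ := by
    intro β hβ hβ2 n hn1 hn2
    have hnge1 : 1 ≤ n := le_trans (le_max_right _ _) hn1
    have hnpos : (0:ℝ) < n := by exact_mod_cast hnge1
    have hL0 : 0 < Real.log (1/β) := Real.log_pos (by rw [lt_div_iff₀ hβ]; linarith)
    have h1 : Real.log (Cζ/β) / n ≤ (Real.log (Cζ + 1) + Real.log (1/β)) / n :=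
      by gcongr; exact hlogC β hβ (by linarith)
    have hLn : Real.log (1/β) / n ≤ θ / 2 := by
      rw [div_le_iff₀ hnpos]
      have h2 := mul_le_mul_of_nonneg_right hn2 (le_of_lt (by linarith : (0:ℝ) < θ/2))
      calc Real.log (1/β) = (2 * Real.log (1/β) / θ) * (θ/2) := by field_simp
        _ ≤ (n:ℝ) * (θ/2) := h2
        _ = θ/2 * n := by ring
    have hhn := hN₀ n (le_trans (le_max_left _ _) hn1)
    unfold gammaTh
    have hsplit : (Real.log (Cζ + 1) + Real.log (1/β)) / n + 1 / (n:ℝ) ^ (0.85:ℝ)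
        + ((Fintype.card X : ℝ) * Real.log ((n:ℝ) + 1) + Real.log ((M:ℝ) - 1)) / n
        = ((Real.log (Cζ + 1) + (Fintype.card X : ℝ) * Real.log ((n:ℝ) + 1)
          + Real.log ((M:ℝ) - 1)) / n + 1 / (n:ℝ) ^ (0.85:ℝ)) + Real.log (1/β) / n := by
      ring
    have hfinal : Real.log (Cζ/β) / n + 1 / (n:ℝ) ^ (0.85:ℝ)
        + ((Fintype.card X : ℝ) * Real.log ((n:ℝ) + 1) + Real.log ((M:ℝ) - 1)) / n
        ≤ ((Real.log (Cζ + 1) + (Fintype.card X : ℝ) * Real.log ((n:ℝ) + 1)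
          + Real.log ((M:ℝ) - 1)) / n + 1 / (n:ℝ) ^ (0.85:ℝ)) + Real.log (1/β) / n := by
      rw [← hsplit]
      linarith
    linarith
  -- ### tail bound for Tstar
  have hTail : ∀ β : ℝ, 0 < β → β ≤ 1/2 → ∀ r : ℝ,
      (N1:ℝ) + 2 ≤ r → 2 * Real.log (1/β) / θ + 2 ≤ r →
      μ i {ω | r ≤ ((Tstar P d Δ β ω).toNat : ℝ)}
        ≤ ENNReal.ofReal ((2 * Fintype.card X * Real.exp κ) * Real.exp (-κ * r)) := by
    intro β hβ hβ2 r hr1 hr2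
    have hr2' : (2:ℝ) ≤ r := by
      have : (0:ℝ) ≤ N1 := Nat.cast_nonneg _
      linarith
    set m' : ℕ := ⌈r⌉₊ with hm'def
    have hm'ge : r ≤ (m' : ℝ) := Nat.le_ceil r
    have hm'2 : 2 ≤ m' := by
      have : (2:ℝ) ≤ (m':ℝ) := le_trans hr2' hm'ge
      exact_mod_cast this
    set n : ℕ := m' - 1 with hndef
    have hn1 : 1 ≤ n := by omega
    have hncast : (n:ℝ) = (m':ℝ) - 1 := by
      rw [hndef, Nat.cast_sub (by omega)]
      norm_num
    have hnr : r - 1 ≤ (n:ℝ) := by rw [hncast]; linarith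
    have hnN1 : N1 ≤ n := by
      have h1 : (N1:ℝ) ≤ (n:ℝ) := by linarith
      exact_mod_cast h1
    have hn2 : 2 * Real.log (1/β) / θ ≤ (n:ℝ) := by linarith
    have hγn : gammaTh (Fintype.card X) M β n ≤ θ := hγ β hβ hβ2 n hnN1 hn2
    have hincl : {ω : ℕ → X | r ≤ ((Tstar P d Δ β ω).toNat : ℝ)}
        ⊆ {ω | ∃ a, δb ≤ |emp n ω a - push (P i) (Atil i) a|} := by
      intro ω hω
      simp only [Set.mem_setOf_eq] at hω ⊢
      by_contra hno
      push_neg at hno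
      have hZn : θ ≤ Zstat P d Δ i n ω := hZ n ω hn1 hno
      have hmemTi : (n : ℕ∞) ∈ {t : ℕ∞ | ∃ n' : ℕ, t = (n' : ℕ∞) ∧ 1 ≤ n' ∧
          gammaTh (Fintype.card X) M β n' ≤ Zstat P d Δ i n' ω} :=
        ⟨n, rfl, hn1, le_trans hγn hZn⟩
      have hTi : Ti P d Δ β i ω ≤ (n : ℕ∞) := sInf_le hmemTi
      have hTs : Tstar P d Δ β ω ≤ (n : ℕ∞) := le_trans (iInf_le _ i) hTi
      have htoNat : (Tstar P d Δ β ω).toNat ≤ n := by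
        have h1 := ENat.toNat_le_toNat hTs (by simp : (n : ℕ∞) ≠ ⊤)
        simpa using h1
      have hm'le : m' ≤ (Tstar P d Δ β ω).toNat := Nat.ceil_le.2 hω
      omega
    calc μ i {ω : ℕ → X | r ≤ ((Tstar P d Δ β ω).toNat : ℝ)}
        ≤ μ i {ω | ∃ a, δb ≤ |emp n ω a - push (P i) (Atil i) a|} := measure_mono hincl
      _ ≤ ENNReal.ofReal (2 * Fintype.card X * Real.exp (-κ * n)) := hbad n hn1
      _ ≤ ENNReal.ofReal ((2 * Fintype.card X * Real.exp κ) * Real.exp (-κ * r)) := by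
          apply ENNReal.ofReal_le_ofReal
          have hexp : Real.exp (-κ * n) ≤ Real.exp κ * Real.exp (-κ * r) := by
            rw [← Real.exp_add]
            apply Real.exp_le_exp.2
            nlinarith
          calc 2 * (Fintype.card X : ℝ) * Real.exp (-κ * n)
              ≤ 2 * (Fintype.card X : ℝ) * (Real.exp κ * Real.exp (-κ * r)) := by
                apply mul_le_mul_of_nonneg_left hexp (by positivity)
            _ = (2 * Fintype.card X * Real.exp κ) * Real.exp (-κ * r) := by ring
  -- ### integral bound, uniform in β ≤ 1/2
  set L₀ : ℝ := Real.log 2 with hL₀def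
  have hL₀pos : 0 < L₀ := Real.log_pos (by norm_num)
  set aa : ℝ := κ * L₀ / 2 with haadef
  have haapos : 0 < aa := by positivity
  have hv₀lt : Real.exp (-aa) < 1 := Real.exp_lt_one_iff.2 (by linarith)
  have hv₀pos : (0:ℝ) < 1 - Real.exp (-aa) := by linarith
  set C₁ : ℝ := 2 * Fintype.card X * Real.exp κ with hC₁def
  have hC₁pos : 0 < C₁ := by positivity
  set B : ℝ → ℝ := fun η => (C₁ / (1 - Real.exp (-aa))) * Real.exp (-aa * η) with hBdef
  have hBpos : ∀ η, 0 < B η := fun η => by positivity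
  set η₁ : ℝ := ((N1:ℝ) + 2) / L₀ + 2 / θ + 2 / L₀ with hη₁def
  have hη₁pos : 0 < η₁ := by positivity
  have hIB : ∀ η : ℝ, η₁ ≤ η → ∀ β : ℝ, 0 < β → β ≤ 1/2 →
      (∫ ω in {ω | η ≤ ((Tstar P d Δ β ω).toNat : ℝ) / Real.log (1/β)},
        ((Tstar P d Δ β ω).toNat : ℝ) / Real.log (1/β) ∂(μ i)) ≤ B η := by
    intro η hη β hβ hβ2
    set L : ℝ := Real.log (1/β) with hLdef
    have hL : L₀ ≤ L := by
      rw [hLdef, hL₀def]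
      apply Real.log_le_log (by norm_num)
      rw [le_div_iff₀ hβ]; linarith
    have hLpos : 0 < L := lt_of_lt_of_le hL₀pos hL
    have hη0 : (0:ℝ) ≤ η := le_trans hη₁pos.le hη
    set f : (ℕ → X) → ℝ := fun ω => ((Tstar P d Δ β ω).toNat : ℝ) / L with hfdef
    set S : Set (ℕ → X) := {ω | η ≤ f ω} with hSdef
    have hf0 : ∀ ω, 0 ≤ f ω := fun ω => div_nonneg (Nat.cast_nonneg _) hLpos.le
    -- the two validity conditions for the tail bound
    have hcond : (N1:ℝ) + 2 ≤ η * L ∧ 2 * L / θ + 2 ≤ η * L := by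
      clear_value N1 θ η₁ L L₀
      have hLL₀ : (1:ℝ) ≤ L / L₀ := by rw [le_div_iff₀ hL₀pos]; linarith
      have hmono : η₁ * L ≤ η * L := mul_le_mul_of_nonneg_right hη hLpos.le
      have hexpand : η₁ * L = ((N1:ℝ) + 2) * (L / L₀) + (2 / θ) * L + 2 * (L / L₀) := by
        rw [hη₁def]; field_simp
      constructor
      · have h1 : ((N1:ℝ) + 2) * 1 ≤ ((N1:ℝ) + 2) * (L / L₀) :=
          mul_le_mul_of_nonneg_left hLL₀ (by positivity)
        have h2 : (0:ℝ) ≤ (2 / θ) * L := by positivity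
        have h3 : (0:ℝ) ≤ 2 * (L / L₀) := by positivity
        nlinarith
      · have h1 : (2:ℝ) * 1 ≤ 2 * (L / L₀) := by nlinarith
        have h2 : (0:ℝ) ≤ ((N1:ℝ) + 2) * (L / L₀) := by positivity
        have heq : (2 / θ) * L = 2 * L / θ := by ring
        nlinarith
    by_cases hInt : IntegrableOn f S (μ i)
    case neg =>
      rw [MeasureTheory.integral_undef hInt]
      exact (hBpos η).le
    case pos =>
      have hmeas0 : AEStronglyMeasurable f ((μ i).restrict S) := hInt.1
      rw [MeasureTheory.integral_eq_lintegral_of_nonneg_ae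
        (Filter.Eventually.of_forall fun ω => hf0 ω) hmeas0]
      apply ENNReal.toReal_le_of_le_ofReal (hBpos η).le
      set g : (ℕ → X) → ℝ := hmeas0.mk f with hgdef
      have hgm : Measurable g := hmeas0.stronglyMeasurable_mk.measurable
      have hae : f =ᵐ[(μ i).restrict S] g := hmeas0.ae_eq_mk
      have hofReal : (fun ω => ENNReal.ofReal (f ω)) =ᵐ[(μ i).restrict S]
          (fun ω => ENNReal.ofReal (g ω)) := hae.mono fun ω h => by dsimp only; rw [h]
      rw [lintegral_congr_ae hofReal]
      have hGmmeas : ∀ m : ℕ, MeasurableSet {ω : ℕ → X | (m:ℝ) ≤ g ω} :=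
        fun m => measurableSet_le measurable_const hgm
      have h1 : ∫⁻ ω, ENNReal.ofReal (g ω) ∂((μ i).restrict S)
          ≤ ∫⁻ ω, ∑' m : ℕ, (if (m:ℝ) ≤ g ω then (1:ℝ≥0∞) else 0) ∂((μ i).restrict S) :=
        lintegral_mono fun ω => AHTofReal_le_tsum_indicator (g ω)
      have h2 : ∫⁻ ω, ∑' m : ℕ, (if (m:ℝ) ≤ g ω then (1:ℝ≥0∞) else 0) ∂((μ i).restrict S)
          = ∑' m : ℕ, ((μ i).restrict S) {ω : ℕ → X | (m:ℝ) ≤ g ω} := by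
        rw [MeasureTheory.lintegral_tsum
          (fun m => (Measurable.ite (hGmmeas m) measurable_const measurable_const).aemeasurable)]
        congr 1
        funext m
        have hind : (fun ω => (if (m:ℝ) ≤ g ω then (1:ℝ≥0∞) else 0))
            = Set.indicator {ω : ℕ → X | (m:ℝ) ≤ g ω} (fun _ => (1:ℝ≥0∞)) := by
          funext ω
          rw [Set.indicator_apply]
          rfl
        rw [hind, lintegral_indicator (hGmmeas m), setLIntegral_one]
      -- per-level tail bound
      have h3 : ∀ m : ℕ, ((μ i).restrict S) {ω : ℕ → X | (m:ℝ) ≤ g ω}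
          ≤ ENNReal.ofReal (C₁ * (Real.exp (-(κ * L * η / 2))
              * Real.exp (-(κ * L / 2)) ^ m)) := by
        intro m
        rw [Measure.restrict_apply (hGmmeas m)]
        set N : Set (ℕ → X) := {ω | ¬ f ω = g ω} with hNdef
        have hN0 : ((μ i).restrict S) N = 0 := by
          have := hae
          rw [Filter.EventuallyEq, MeasureTheory.ae_iff] at this
          exact this
        set N' := toMeasurable ((μ i).restrict S) N with hN'def
        have hN'0 : ((μ i).restrict S) N' = 0 := by
          rw [hN'def, measure_toMeasurable]; exact hN0
        have hN'meas : MeasurableSet N' := measurableSet_toMeasurable _ _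
        have hμN' : μ i (N' ∩ S) = 0 := by
          rw [← Measure.restrict_apply hN'meas]; exact hN'0
        have hsplit : μ i ({ω : ℕ → X | (m:ℝ) ≤ g ω} ∩ S)
            ≤ μ i (({ω : ℕ → X | (m:ℝ) ≤ g ω} ∩ S) \ N) + μ i (N' ∩ S) := by
          calc μ i ({ω : ℕ → X | (m:ℝ) ≤ g ω} ∩ S)
              = μ i ((({ω : ℕ → X | (m:ℝ) ≤ g ω} ∩ S) \ N)
                  ∪ (({ω : ℕ → X | (m:ℝ) ≤ g ω} ∩ S) ∩ N)) := by
                rw [Set.diff_union_inter]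
            _ ≤ μ i (({ω : ℕ → X | (m:ℝ) ≤ g ω} ∩ S) \ N)
                + μ i (({ω : ℕ → X | (m:ℝ) ≤ g ω} ∩ S) ∩ N) := measure_union_le _ _
            _ ≤ μ i (({ω : ℕ → X | (m:ℝ) ≤ g ω} ∩ S) \ N) + μ i (N' ∩ S) := by
                refine add_le_add le_rfl (measure_mono ?_)
                intro ω hω
                exact ⟨subset_toMeasurable _ _ hω.2, hω.1.2⟩
        rw [hμN', add_zero] at hsplit
        have hsub2 : ({ω : ℕ → X | (m:ℝ) ≤ g ω} ∩ S) \ N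
            ⊆ {ω : ℕ → X | max (m:ℝ) η * L ≤ ((Tstar P d Δ β ω).toNat : ℝ)} := by
          rintro ω ⟨⟨hg, hS⟩, hNω⟩
          simp only [hNdef, Set.mem_setOf_eq, not_not] at hNω
          simp only [Set.mem_setOf_eq] at hg hS ⊢
          have hfω : (m:ℝ) ≤ f ω := by rw [hNω]; exact hg
          have hmax : max (m:ℝ) η ≤ f ω := max_le hfω hS
          have : max (m:ℝ) η ≤ ((Tstar P d Δ β ω).toNat : ℝ) / L := hmax
          rwa [le_div_iff₀ hLpos] at this
        have hrr1 : (N1:ℝ) + 2 ≤ max (m:ℝ) η * L := by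
          have : η * L ≤ max (m:ℝ) η * L :=
            mul_le_mul_of_nonneg_right (le_max_right _ _) hLpos.le
          linarith [hcond.1]
        have hrr2 : 2 * L / θ + 2 ≤ max (m:ℝ) η * L := by
          have : η * L ≤ max (m:ℝ) η * L :=
            mul_le_mul_of_nonneg_right (le_max_right _ _) hLpos.le
          linarith [hcond.2]
        have htail := hTail β hβ hβ2 (max (m:ℝ) η * L) hrr1 hrr2
        have hfinal : μ i ({ω : ℕ → X | (m:ℝ) ≤ g ω} ∩ S)
            ≤ ENNReal.ofReal (C₁ * Real.exp (-κ * (max (m:ℝ) η * L))) := by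
          rw [hC₁def]
          exact le_trans hsplit (le_trans (measure_mono hsub2) htail)
        refine le_trans hfinal (ENNReal.ofReal_le_ofReal ?_)
        have hexp : Real.exp (-κ * (max (m:ℝ) η * L))
            ≤ Real.exp (-(κ * L * η / 2)) * Real.exp (-(κ * L / 2)) ^ m := by
          rw [← Real.exp_nat_mul, ← Real.exp_add]
          apply Real.exp_le_exp.2
          have hmax2 : ((m:ℝ) + η) / 2 ≤ max (m:ℝ) η := by
            rcases le_total (m:ℝ) η with h | h
            · rw [max_eq_right h]; linarith
            · rw [max_eq_left h]; linarith
          have hm0 : (0:ℝ) ≤ (m:ℝ) := Nat.cast_nonneg _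
          nlinarith [mul_le_mul_of_nonneg_right hmax2 (mul_pos hκpos hLpos).le]
        exact mul_le_mul_of_nonneg_left hexp hC₁pos.le
      -- sum the geometric series
      have hsummable : Summable (fun m : ℕ => C₁ * (Real.exp (-(κ * L * η / 2))
          * Real.exp (-(κ * L / 2)) ^ m)) := by
        apply Summable.mul_left
        apply Summable.mul_left
        exact summable_geometric_of_lt_one (Real.exp_nonneg _)
          (Real.exp_lt_one_iff.2 (by nlinarith [mul_pos hκpos hLpos]))
      have h4 : ∑' m : ℕ, ((μ i).restrict S) {ω : ℕ → X | (m:ℝ) ≤ g ω}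
          ≤ ENNReal.ofReal (B η) := by
        calc ∑' m : ℕ, ((μ i).restrict S) {ω : ℕ → X | (m:ℝ) ≤ g ω}
            ≤ ∑' m : ℕ, ENNReal.ofReal (C₁ * (Real.exp (-(κ * L * η / 2))
                * Real.exp (-(κ * L / 2)) ^ m)) := ENNReal.tsum_le_tsum h3
          _ = ENNReal.ofReal (∑' m : ℕ, C₁ * (Real.exp (-(κ * L * η / 2))
                * Real.exp (-(κ * L / 2)) ^ m)) :=
              (ENNReal.ofReal_tsum_of_nonneg (fun m => by positivity) hsummable).symm
          _ ≤ ENNReal.ofReal (B η) := by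
              apply ENNReal.ofReal_le_ofReal
              rw [tsum_mul_left, tsum_mul_left,
                tsum_geometric_of_lt_one (Real.exp_nonneg _)
                  (Real.exp_lt_one_iff.2 (by nlinarith [mul_pos hκpos hLpos]))]
              -- C₁ * (e1 * (1-v)⁻¹) ≤ (C₁/(1-v₀)) * exp(-aa η)
              have he1 : Real.exp (-(κ * L * η / 2)) ≤ Real.exp (-aa * η) := by
                apply Real.exp_le_exp.2
                rw [haadef]
                nlinarith [mul_le_mul_of_nonneg_left
                  (mul_le_mul_of_nonneg_right hL hη0) hκpos.le]
              have hv : Real.exp (-(κ * L / 2)) ≤ Real.exp (-aa) := by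
                apply Real.exp_le_exp.2
                rw [haadef]
                nlinarith [mul_le_mul_of_nonneg_left hL hκpos.le]
              have hvlt : Real.exp (-(κ * L / 2)) < 1 :=
                Real.exp_lt_one_iff.2 (by nlinarith [mul_pos hκpos hLpos])
              have hinv : (1 - Real.exp (-(κ * L / 2)))⁻¹ ≤ (1 - Real.exp (-aa))⁻¹ := by
                apply inv_anti₀ hv₀pos
                linarith
              have hpos1 : (0:ℝ) < 1 - Real.exp (-(κ * L / 2)) := by linarith
              rw [hBdef]
              have hfin : C₁ * (Real.exp (-(κ * L * η / 2)) * (1 - Real.exp (-(κ * L / 2)))⁻¹)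
                  ≤ C₁ * (Real.exp (-aa * η) * (1 - Real.exp (-aa))⁻¹) := by
                apply mul_le_mul_of_nonneg_left _ hC₁pos.le
                apply mul_le_mul he1 hinv (by positivity) (Real.exp_nonneg _)
              calc C₁ * (Real.exp (-(κ * L * η / 2)) * (1 - Real.exp (-(κ * L / 2)))⁻¹)
                  ≤ C₁ * (Real.exp (-aa * η) * (1 - Real.exp (-aa))⁻¹) := hfin
                _ = C₁ / (1 - Real.exp (-aa)) * Real.exp (-aa * η) := by ring
      exact le_trans h1 (le_trans (le_of_eq h2) h4)
  -- ### final assembly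
  have hBtend : Tendsto B atTop (𝓝 0) := by
    rw [hBdef]
    have h1 : Tendsto (fun η : ℝ => -aa * η) atTop atBot :=
      Tendsto.const_mul_atTop_of_neg (by linarith : -aa < 0) tendsto_id
    have h2 := Real.tendsto_exp_atBot.comp h1
    have := h2.const_mul (C₁ / (1 - Real.exp (-aa)))
    simpa using this
  refine tendsto_of_tendsto_of_tendsto_of_le_of_le' tendsto_const_nhds hBtend ?_ ?_
  · -- eventual lower bound 0 ≤ sSup
    filter_upwards [eventually_ge_atTop η₁] with η hη
    have hmem : (∫ ω in {ω | η ≤ ((Tstar P d Δ (1/2) ω).toNat : ℝ) / Real.log (1/(1/2:ℝ))},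
        ((Tstar P d Δ (1/2) ω).toNat : ℝ) / Real.log (1/(1/2:ℝ)) ∂(μ i))
        ∈ {e : ℝ | ∃ α : ℝ, 0 < α ∧ α ≤ 1/2 ∧
          e = ∫ ω in {ω | η ≤ ((Tstar P d Δ α ω).toNat : ℝ) / Real.log (1 / α)},
            ((Tstar P d Δ α ω).toNat : ℝ) / Real.log (1 / α) ∂(μ i)} :=
      ⟨1/2, by norm_num, le_refl _, rfl⟩
    have hbdd : BddAbove {e : ℝ | ∃ α : ℝ, 0 < α ∧ α ≤ 1/2 ∧
        e = ∫ ω in {ω | η ≤ ((Tstar P d Δ α ω).toNat : ℝ) / Real.log (1 / α)},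
          ((Tstar P d Δ α ω).toNat : ℝ) / Real.log (1 / α) ∂(μ i)} := by
      refine ⟨B η, ?_⟩
      rintro e ⟨β, hβ0, hβ2, rfl⟩
      exact hIB η hη β hβ0 hβ2
    have hnn : 0 ≤ ∫ ω in {ω | η ≤ ((Tstar P d Δ (1/2) ω).toNat : ℝ) / Real.log (1/(1/2:ℝ))},
        ((Tstar P d Δ (1/2) ω).toNat : ℝ) / Real.log (1/(1/2:ℝ)) ∂(μ i) :=
      MeasureTheory.integral_nonneg fun ω => div_nonneg (Nat.cast_nonneg _)
        (Real.log_nonneg (by norm_num))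
    exact le_trans hnn (le_csSup hbdd hmem)
  · -- eventual upper bound sSup ≤ B η
    filter_upwards [eventually_ge_atTop η₁] with η hη
    apply Real.sSup_le _ (hBpos η).le
    rintro e ⟨β, hβ0, hβ2, rfl⟩
    exact hIB η hη β hβ0 hβ2

end

end AHT
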